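/- Let K = {x ∈ ℝⁿ : gᵢ(x) ≤ 0 for all i ∈ [m], hⱼ(x) = 0 for all j ∈ [ℓ]}, where each gᵢ is a convex polynomial function and each hⱼ is an affine function, and let F : ℝⁿ → ℝⁿ be a polynomial map. Assume the Abadie constraint qualification holds at every point of K (the Bouligand tangent cone equals the linearization cone at every x ∈ K). Assume furthermore that for every index set α ⊆ [m], the Jacobian matrix DΦ_α(x, λ_α) of the KKT map Φ_α has rank n + |α| + ℓ at every point (x, λ_α) ∈ ℝⁿ × ℝ^{|α|}. Then the solution set Sol(K,F) has finitely many points. -/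

import Mathlib

open Filter Topology

/-- The Bouligand–Severi tangent cone of `K` at `x`. -/
def bouligandTangentCone {n : ℕ} (K : Set (Fin n → ℝ)) (x : Fin n → ℝ) :
    Set (Fin n → ℝ) :=
  {v | ∃ (y : ℕ → Fin n → ℝ) (t : ℕ → ℝ), (∀ k, y k ∈ K) ∧ (∀ k, 0 < t k) ∧
    Tendsto y atTop (nhds x) ∧ Tendsto t atTop (nhds 0) ∧
    Tendsto (fun k => (t k)⁻¹ • (y k - x)) atTop (nhds v)}

/-- The gradient of `f : ℝⁿ → ℝ` at `x`: the vector of partial derivatives. -/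
noncomputable def grad {n : ℕ} (f : (Fin n → ℝ) → ℝ) (x : Fin n → ℝ) : Fin n → ℝ :=
  fun j => fderiv ℝ f x (Pi.single j 1)

/-- The Hessian matrix of `f : ℝⁿ → ℝ` at `x`. -/
noncomputable def hess {n : ℕ} (f : (Fin n → ℝ) → ℝ) (x : Fin n → ℝ) :
    Matrix (Fin n) (Fin n) ℝ :=
  Matrix.of fun a b => fderiv ℝ (fun y => grad f y a) x (Pi.single b 1)

/-- The Jacobian matrix of a map `F : ℝⁿ → ℝⁿ` at `x`. -/
noncomputable def jac {n : ℕ} (F : (Fin n → ℝ) → (Fin n → ℝ)) (x : Fin n → ℝ) :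
    Matrix (Fin n) (Fin n) ℝ :=
  Matrix.of fun a b => fderiv ℝ (fun y => F y a) x (Pi.single b 1)

/-- The linearization cone of the constraint system `(g, h)` at `x`. -/
def linCone {n m l : ℕ} (g : Fin m → (Fin n → ℝ) → ℝ)
    (h : Fin l → ((Fin n → ℝ) →ᵃ[ℝ] ℝ)) (x : Fin n → ℝ) : Set (Fin n → ℝ) :=
  {v | (∀ i, g i x = 0 → ∑ j, grad (g i) x j * v j ≤ 0) ∧
       ∀ j', ∑ j, grad (h j') x j * v j = 0}

/-- The Jacobian `DΦ_α(x, λ_α)` of the KKT map `Φ_α`: the square block matrix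
`[[DF(x) + Σ_{i∈α} λᵢ ∇²gᵢ(x), ∇g_α(x), ∇h(x)], [∇g_α(x)ᵀ, 0, 0], [∇h(x)ᵀ, 0, 0]]`
of size `n + |α| + ℓ`. -/
noncomputable def DPhi {n m l : ℕ} (F : (Fin n → ℝ) → (Fin n → ℝ))
    (g : Fin m → (Fin n → ℝ) → ℝ) (h : Fin l → ((Fin n → ℝ) →ᵃ[ℝ] ℝ))
    (α : Finset (Fin m)) (x : Fin n → ℝ) (lam : {i // i ∈ α} → ℝ) :
    Matrix (Fin n ⊕ ({i // i ∈ α} ⊕ Fin l)) (Fin n ⊕ ({i // i ∈ α} ⊕ Fin l)) ℝ :=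
  Matrix.of fun p q =>
    match p, q with
    | Sum.inl a, Sum.inl b =>
        jac F x a b + ∑ i : {i // i ∈ α}, lam i * hess (g i) x a b
    | Sum.inl a, Sum.inr (Sum.inl i) => grad (g i) x a
    | Sum.inl a, Sum.inr (Sum.inr j) => grad (h j) x a
    | Sum.inr (Sum.inl i), Sum.inl b => grad (g i) x b
    | Sum.inr (Sum.inr j), Sum.inl b => grad (h j) x b
    | Sum.inr _, Sum.inr _ => 0

/-! ### Auxiliary commutative algebra -/

open MvPolynomial

section AuxAlg
variable {σ : Type*} [Fintype σ] [DecidableEq σ]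

noncomputable def mIdeal (z : σ → ℝ) : Ideal (MvPolynomial σ ℝ) :=
  Ideal.span (Set.range fun i => X i - C (z i))

set_option linter.unusedSectionVars false

lemma sub_C_eval_mem (z : σ → ℝ) (q : MvPolynomial σ ℝ) :
    q - C (eval z q) ∈ mIdeal z := by
  induction q using MvPolynomial.induction_on with
  | C a => simp
  | add p q hp hq =>
    have : p + q - C (eval z (p + q)) = (p - C (eval z p)) + (q - C (eval z q)) := by
      simp [map_add]; ring
    rw [this]; exact add_mem hp hq
  | mul_X p a hp =>
    have hX : X a - C (z a) ∈ mIdeal z := Ideal.subset_span ⟨a, rfl⟩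
    have : p * X a - C (eval z (p * X a)) =
        (p - C (eval z p)) * X a + C (eval z p) * (X a - C (z a)) := by
      simp [eval_mul, map_mul]; ring
    rw [this]
    exact add_mem (Ideal.mul_mem_right _ _ hp) (Ideal.mul_mem_left _ _ hX)

lemma taylor_mem (z : σ → ℝ) (q : MvPolynomial σ ℝ) :
    q - C (eval z q) - ∑ b, C (eval z (pderiv b q)) * (X b - C (z b)) ∈
      mIdeal z * mIdeal z := by
  induction q using MvPolynomial.induction_on with
  | C a => simp
  | add p q hp hq =>
    have : p + q - C (eval z (p + q)) -
        ∑ b, C (eval z (pderiv b (p + q))) * (X b - C (z b)) =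
        (p - C (eval z p) - ∑ b, C (eval z (pderiv b p)) * (X b - C (z b))) +
        (q - C (eval z q) - ∑ b, C (eval z (pderiv b q)) * (X b - C (z b))) := by
      simp only [map_add, add_mul]; rw [Finset.sum_add_distrib]; ring
    rw [this]; exact add_mem hp hq
  | mul_X p a hp =>
    have key : p * X a - C (eval z (p * X a)) -
        ∑ b, C (eval z (pderiv b (p * X a))) * (X b - C (z b)) =
        (p - C (eval z p)) * (X a - C (z a)) +
        C (z a) * (p - C (eval z p) - ∑ b, C (eval z (pderiv b p)) * (X b - C (z b))) := by
      have h1 : ∀ b : σ, pderiv b (p * X a) = pderiv b p * X a + p * pderiv b (X a) := by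
        intro b; rw [pderiv_mul]
      have h2 : ∀ b : σ, C (eval z (pderiv b (p * X a))) * (X b - C (z b)) =
          C (z a) * (C (eval z (pderiv b p)) * (X b - C (z b))) +
          (if b = a then C (eval z p) * (X b - C (z b)) else 0) := by
        intro b
        rw [h1]
        by_cases hba : b = a
        · subst hba
          simp [pderiv_X_self, eval_mul, map_mul, map_add]
          ring
        · rw [pderiv_X_of_ne (Ne.symm hba)]
          simp [hba, eval_mul, map_mul]
          ring
      rw [Finset.sum_congr rfl (fun b _ => h2 b)]
      rw [Finset.sum_add_distrib, ← Finset.mul_sum, Finset.sum_ite_eq' Finset.univ a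
        (fun b => C (eval z p) * (X b - C (z b)))]
      simp [eval_mul, map_mul]
      ring
    rw [key]
    exact add_mem
      (Ideal.mul_mem_mul (sub_C_eval_mem z p) (Ideal.subset_span ⟨a, rfl⟩))
      (Ideal.mul_mem_left _ _ hp)

lemma mIdeal_eq_ker (z : σ → ℝ) :
    mIdeal z = RingHom.ker (eval z : MvPolynomial σ ℝ →+* ℝ) := by
  apply le_antisymm
  · rw [mIdeal, Ideal.span_le]
    rintro q ⟨i, rfl⟩
    simp [RingHom.mem_ker]
  · intro q hq
    rw [RingHom.mem_ker] at hq
    have := sub_C_eval_mem z q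
    rwa [hq, map_zero, sub_zero] at this

lemma mIdeal_isMaximal (z : σ → ℝ) : (mIdeal z).IsMaximal := by
  rw [mIdeal_eq_ker]
  exact RingHom.ker_isMaximal_of_surjective _ (fun r => ⟨C r, eval_C r⟩)

lemma mIdeal_injective : Function.Injective (mIdeal (σ := σ)) := by
  intro z w hzw
  funext i
  have h1 : X i - C (z i) ∈ mIdeal w := hzw ▸ Ideal.subset_span ⟨i, rfl⟩
  rw [mIdeal_eq_ker, RingHom.mem_ker] at h1
  simp at h1
  linarith

end AuxAlg

lemma Ideal.minimalPrimes_finite {R : Type*} [CommRing R] [IsNoetherianRing R] (I : Ideal R) :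
    (I.minimalPrimes).Finite := by
  rw [Ideal.minimalPrimes_eq_comap]
  exact (minimalPrimes.finite_of_isNoetherianRing (R ⧸ I)).image _

lemma mem_minimalPrimes_of_sq {R : Type*} [CommRing R] [IsNoetherianRing R] {I m : Ideal R}
    (hm : m.IsMaximal) (hIm : I ≤ m) (hsq : m ≤ I ⊔ m * m) : m ∈ I.minimalPrimes := by
  set π := Ideal.Quotient.mk I with hπ
  have hπs : Function.Surjective π := Ideal.Quotient.mk_surjective
  set mb : Ideal (R ⧸ I) := m.map π with hmb
  have hmb2 : mb ≤ mb • mb := by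
    rw [Ideal.smul_eq_mul]
    calc mb ≤ (I ⊔ m * m).map π := Ideal.map_mono hsq
    _ = I.map π ⊔ (m * m).map π := by rw [Ideal.map_sup]
    _ = mb * mb := by rw [Ideal.map_quotient_self, Ideal.map_mul, bot_sup_eq]
  have hfg : mb.FG := IsNoetherian.noetherian mb
  obtain ⟨r, hr1, hr0⟩ :=
    Submodule.exists_sub_one_mem_and_smul_eq_zero_of_fg_of_le_smul mb mb hfg hmb2
  refine ⟨⟨hm.isPrime, hIm⟩, ?_⟩
  rintro p ⟨hp, hIp⟩ hpm
  intro a ha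
  obtain ⟨s, hs⟩ := hπs r
  have hsa : s * a ∈ I := by
    have : π (s * a) = 0 := by
      rw [map_mul, hs]
      exact hr0 (π a) (Ideal.mem_map_of_mem π ha)
    rwa [← RingHom.mem_ker, Ideal.mk_ker] at this
  have hs_not : s ∉ p := by
    intro hsp
    have hsm : π s ∈ mb := Ideal.mem_map_of_mem π (hpm hsp)
    have h1 : (1 : R ⧸ I) ∈ mb := by
      have h2 : π s - (π s - 1) ∈ mb := mb.sub_mem hsm (hs ▸ hr1)
      simpa using h2
    have : (1 : R) ∈ m := by
      have hcomap : mb.comap π = m := by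
        rw [hmb, Ideal.comap_map_of_surjective π hπs, ← RingHom.ker_eq_comap_bot, Ideal.mk_ker]
        exact sup_eq_left.mpr hIm
      rw [← hcomap]
      simpa using h1
    exact hm.ne_top (Ideal.eq_top_of_unit_mem m 1 1 this (mul_one 1))
  exact (hp.mem_or_mem (hIp hsa)).resolve_left hs_not

/-- Zeros of a square polynomial system at which the Jacobian matrix has a left
inverse form a finite set. -/
theorem finite_nondegenerate_zeros {σ : Type*} [Fintype σ] [DecidableEq σ]
    (f : σ → MvPolynomial σ ℝ) :
    {z : σ → ℝ | (∀ p, eval z (f p) = 0) ∧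
      ∃ A : Matrix σ σ ℝ,
        A * Matrix.of (fun p b => eval z (pderiv b (f p))) = 1}.Finite := by
  classical
  set I : Ideal (MvPolynomial σ ℝ) := Ideal.span (Set.range f) with hI
  have key : ∀ z ∈ {z : σ → ℝ | (∀ p, eval z (f p) = 0) ∧
      ∃ A : Matrix σ σ ℝ, A * Matrix.of (fun p b => eval z (pderiv b (f p))) = 1},
      mIdeal z ∈ I.minimalPrimes := by
    rintro z ⟨hz, A, hA⟩
    have hIm : I ≤ mIdeal z := by
      rw [hI, Ideal.span_le]
      rintro q ⟨p, rfl⟩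
      rw [mIdeal_eq_ker, SetLike.mem_coe, RingHom.mem_ker]
      exact hz p
    refine mem_minimalPrimes_of_sq (mIdeal_isMaximal z) hIm ?_
    rw [mIdeal, Ideal.span_le]
    rintro q ⟨b, rfl⟩
    set M : Matrix σ σ ℝ := Matrix.of (fun p b => eval z (pderiv b (f p))) with hM
    have hu : ∀ p, (∑ c, C (M p c) * (X c - C (z c))) ∈ I ⊔ mIdeal z * mIdeal z := by
      intro p
      have h1 := taylor_mem z (f p)
      rw [hz p, map_zero, sub_zero] at h1
      have h2 : (∑ c, C (M p c) * (X c - C (z c))) =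
          f p - (f p - ∑ c, C (M p c) * (X c - C (z c))) := by ring
      rw [h2]
      exact Submodule.sub_mem _ (Ideal.mem_sup_left (Ideal.subset_span ⟨p, rfl⟩))
        (Ideal.mem_sup_right h1)
    have hsum : (∑ p, C (A b p) * ∑ c, C (M p c) * (X c - C (z c)))
        ∈ I ⊔ mIdeal z * mIdeal z :=
      Submodule.sum_mem _ (fun p _ => Ideal.mul_mem_left _ _ (hu p))
    have hcalc : (∑ p, C (A b p) * ∑ c, C (M p c) * (X c - C (z c)))
        = X b - C (z b) := by
      calc (∑ p, C (A b p) * ∑ c, C (M p c) * (X c - C (z c)))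
          = ∑ c, ∑ p, C (A b p * M p c) * (X c - C (z c)) := by
            rw [Finset.sum_comm]
            refine Finset.sum_congr rfl fun p _ => ?_
            rw [Finset.mul_sum]
            refine Finset.sum_congr rfl fun c _ => ?_
            rw [map_mul]; ring
        _ = ∑ c, C ((A * M) b c) * (X c - C (z c)) := by
            refine Finset.sum_congr rfl fun c _ => ?_
            rw [← Finset.sum_mul, ← map_sum]
            rfl
        _ = X b - C (z b) := by
            rw [hA]
            rw [Finset.sum_eq_single b]
            · simp [Matrix.one_apply]
            · intro c _ hc
              simp [Matrix.one_apply, Ne.symm hc]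
            · intro hb; exact absurd (Finset.mem_univ b) hb
    show X b - C (z b) ∈ (I ⊔ mIdeal z * mIdeal z : Ideal (MvPolynomial σ ℝ))
    rw [← hcalc]
    exact hsum
  have hfin := Ideal.minimalPrimes_finite I
  refine Set.Finite.of_finite_image (f := mIdeal) (hfin.subset ?_) (mIdeal_injective.injOn)
  rintro J ⟨z, hz, rfl⟩
  exact key z hz

/-! ### Differentiation of polynomial evaluation -/

section AuxAna
variable {ι : Type*} [Fintype ι] [DecidableEq ι]

noncomputable def evalDeriv (P : MvPolynomial ι ℝ) (x : ι → ℝ) : (ι → ℝ) →L[ℝ] ℝ :=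
  ∑ b, eval x (pderiv b P) • (ContinuousLinearMap.proj b : (ι → ℝ) →L[ℝ] ℝ)

set_option linter.unusedSectionVars false

lemma evalDeriv_apply (P : MvPolynomial ι ℝ) (x v : ι → ℝ) :
    evalDeriv P x v = ∑ b, eval x (pderiv b P) * v b := by
  simp [evalDeriv, ContinuousLinearMap.sum_apply]

lemma hasFDerivAt_eval (P : MvPolynomial ι ℝ) (x : ι → ℝ) :
    HasFDerivAt (fun y => eval y P) (evalDeriv P x) x := by
  induction P using MvPolynomial.induction_on with
  | C a =>
    have h0 : evalDeriv (C (σ := ι) a) x = 0 := by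
      ext v; simp [evalDeriv_apply]
    simp only [eval_C, h0]
    exact hasFDerivAt_const a x
  | add p q hp hq =>
    have h0 : evalDeriv (p + q) x = evalDeriv p x + evalDeriv q x := by
      ext v; simp [evalDeriv_apply, add_mul, Finset.sum_add_distrib]
    simp only [eval_add, h0]
    exact hp.add hq
  | mul_X p a hp =>
    have hXa : HasFDerivAt (fun y : ι → ℝ => y a)
        (ContinuousLinearMap.proj a : (ι → ℝ) →L[ℝ] ℝ) x := by
      have := (ContinuousLinearMap.proj (R := ℝ) (φ := fun _ : ι => ℝ) a).hasFDerivAt (x := x)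
      convert this using 1
      rfl
    have h0 : evalDeriv (p * X a) x =
        eval x p • (ContinuousLinearMap.proj a : (ι → ℝ) →L[ℝ] ℝ) + x a • evalDeriv p x := by
      ext v
      simp only [evalDeriv_apply, ContinuousLinearMap.add_apply, ContinuousLinearMap.smul_apply,
        ContinuousLinearMap.proj_apply, smul_eq_mul]
      have hterm : ∀ b : ι, eval x (pderiv b (p * X a)) * v b =
          x a * (eval x (pderiv b p) * v b) + (if b = a then eval x p * v b else 0) := by
        intro b
        rw [pderiv_mul]
        by_cases hba : b = a
        · subst hba; simp [pderiv_X_self]; ring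
        · rw [pderiv_X_of_ne (Ne.symm hba)]; simp [hba]; ring
      rw [Finset.sum_congr rfl fun b _ => hterm b, Finset.sum_add_distrib, ← Finset.mul_sum,
        Finset.sum_ite_eq' Finset.univ a (fun b => eval x p * v b)]
      simp
      ring
    simp only [eval_mul, eval_X, h0]
    exact hp.mul hXa

end AuxAna

lemma grad_eval {n : ℕ} (P : MvPolynomial (Fin n) ℝ) (f : (Fin n → ℝ) → ℝ)
    (hf : ∀ x, f x = eval x P) (x : Fin n → ℝ) (j : Fin n) :
    grad f x j = eval x (pderiv j P) := by
  have hfe : f = fun y => eval y P := funext hf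
  rw [grad, hfe, (hasFDerivAt_eval P x).fderiv, evalDeriv_apply]
  rw [Finset.sum_eq_single j]
  · simp
  · intro b _ hb; simp [Pi.single_apply, hb]
  · intro hj; exact absurd (Finset.mem_univ j) hj

lemma hess_eval {n : ℕ} (P : MvPolynomial (Fin n) ℝ) (f : (Fin n → ℝ) → ℝ)
    (hf : ∀ x, f x = eval x P) (x : Fin n → ℝ) (a b : Fin n) :
    hess f x a b = eval x (pderiv b (pderiv a P)) := by
  have h1 : ∀ y, grad f y a = eval y (pderiv a P) := fun y => grad_eval P f hf y a
  have h2 : hess f x a b = grad (fun y => grad f y a) x b := rfl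
  rw [h2]
  exact grad_eval (pderiv a P) _ h1 x b

lemma jac_eval {n : ℕ} (P : MvPolynomial (Fin n) ℝ) (F : (Fin n → ℝ) → (Fin n → ℝ))
    (a : Fin n) (hf : ∀ x, F x a = eval x P) (x : Fin n → ℝ) (b : Fin n) :
    jac F x a b = eval x (pderiv b P) := by
  have h2 : jac F x a b = grad (fun y => F y a) x b := rfl
  rw [h2]
  exact grad_eval P _ hf x b

/-! ### Affine maps as polynomials -/

noncomputable def affPoly {n : ℕ} (h : (Fin n → ℝ) →ᵃ[ℝ] ℝ) : MvPolynomial (Fin n) ℝ :=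
  C (h 0) + ∑ a, C (h.linear (Pi.single a 1)) * X a

lemma affPoly_eval {n : ℕ} (h : (Fin n → ℝ) →ᵃ[ℝ] ℝ) (x : Fin n → ℝ) :
    h x = eval x (affPoly h) := by
  have hd : h x = h.linear x + h 0 := by
    have := congrFun (AffineMap.decomp h) x
    simpa using this
  have hl : h.linear x = ∑ a, x a • h.linear (Pi.single a 1) := by
    have hsingle : ∀ a : Fin n, (fun j => if a = j then (1:ℝ) else 0) = Pi.single a 1 := by
      intro a; funext j; simp [Pi.single_apply, eq_comm]
    have := LinearMap.pi_apply_eq_sum_univ h.linear x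
    simp only [hsingle] at this
    exact this
  rw [hd, hl, affPoly]
  simp [smul_eq_mul, mul_comm]
  ring

lemma affPoly_pderiv {n : ℕ} (h : (Fin n → ℝ) →ᵃ[ℝ] ℝ) (a : Fin n) :
    pderiv a (affPoly h) = C (h.linear (Pi.single a 1)) := by
  rw [affPoly, map_add, pderiv_C, map_sum, zero_add]
  rw [Finset.sum_eq_single a]
  · rw [pderiv_C_mul, pderiv_X_self, mul_one]
  · intro c _ hc
    rw [pderiv_C_mul, pderiv_X_of_ne hc, mul_zero]
  · intro ha; exact absurd (Finset.mem_univ a) ha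

lemma affPoly_pderiv_pderiv {n : ℕ} (h : (Fin n → ℝ) →ᵃ[ℝ] ℝ) (a b : Fin n) :
    pderiv b (pderiv a (affPoly h)) = 0 := by
  rw [affPoly_pderiv, pderiv_C]

/-! ### Linear algebra -/

lemma exists_left_inverse_of_rank_eq_card {k : Type*} [Fintype k] [DecidableEq k]
    (M : Matrix k k ℝ) (h : M.rank = Fintype.card k) : ∃ A : Matrix k k ℝ, A * M = 1 := by
  have hsurj : Function.Surjective M.mulVec := by
    have : Function.Surjective M.mulVecLin := by
      rw [← LinearMap.range_eq_top]
      apply Submodule.eq_top_of_finrank_eq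
      rw [← Matrix.rank, h, Module.finrank_pi]
    simpa [Matrix.coe_mulVecLin] using this
  have hunit : IsUnit M := Matrix.mulVec_surjective_iff_isUnit.mp hsurj
  obtain ⟨u, hu⟩ := hunit
  refine ⟨(↑u⁻¹ : Matrix k k ℝ), ?_⟩
  rw [← hu, ← Units.val_mul]
  simp

lemma mem_span_of_forall_inner {d : ℕ} {κ : Type*} [Fintype κ]
    (w : κ → EuclideanSpace ℝ (Fin d)) (u : EuclideanSpace ℝ (Fin d))
    (H : ∀ v : EuclideanSpace ℝ (Fin d), (∀ k, (inner ℝ (w k) v : ℝ) = 0) →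
      (inner ℝ u v : ℝ) = 0) :
    u ∈ Submodule.span ℝ (Set.range w) := by
  have h2 : u ∈ (Submodule.span ℝ (Set.range w))ᗮᗮ := by
    intro v hv
    rw [Submodule.mem_orthogonal] at hv
    have hall : ∀ k, (inner ℝ (w k) v : ℝ) = 0 := by
      intro k
      exact hv (w k) (Submodule.subset_span ⟨k, rfl⟩)
    have := H v hall
    rwa [real_inner_comm] at this
  rwa [Submodule.orthogonal_orthogonal] at h2

lemma exists_coeffs_of_mem_span {d : ℕ} {κ : Type*} [Fintype κ]
    (w : κ → EuclideanSpace ℝ (Fin d)) (u : EuclideanSpace ℝ (Fin d))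
    (h : u ∈ Submodule.span ℝ (Set.range w)) : ∃ c : κ → ℝ, u = ∑ k, c k • w k := by
  rw [Submodule.mem_span_range_iff_exists_fun] at h
  obtain ⟨c, hc⟩ := h
  exact ⟨c, hc.symm⟩

lemma pderiv_rename_ne {σ τ : Type*} [DecidableEq σ] [DecidableEq τ] {t : τ}
    (f : σ → τ) (hne : ∀ s, f s ≠ t) (P : MvPolynomial σ ℝ) :
    pderiv t (rename f P) = 0 := by
  apply pderiv_eq_zero_of_notMem_vars
  intro hmem
  obtain ⟨s, _, hs⟩ := mem_vars_rename f P hmem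
  exact hne s hs

/-! ### Main theorem -/

/-- For `K = {x : gᵢ(x) ≤ 0, hⱼ(x) = 0}` with `gᵢ` convex polynomial and
`hⱼ` affine, `F` a polynomial map, the Abadie constraint qualification holding on `K`,
and the Jacobian `DΦ_α` of full rank `n + |α| + ℓ` everywhere for every `α ⊆ [m]`,
the solution set `Sol(K, F)` has finitely many points. -/
theorem solution_set_finite_of_full_rank {n m l : ℕ}
    (g : Fin m → (Fin n → ℝ) → ℝ)
    (hgpoly : ∀ i, ∃ P : MvPolynomial (Fin n) ℝ, ∀ x, g i x = MvPolynomial.eval x P)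
    (hgconv : ∀ i, ConvexOn ℝ Set.univ (g i))
    (h : Fin l → ((Fin n → ℝ) →ᵃ[ℝ] ℝ))
    (F : (Fin n → ℝ) → (Fin n → ℝ))
    (hFpoly : ∀ i, ∃ P : MvPolynomial (Fin n) ℝ, ∀ x, F x i = MvPolynomial.eval x P)
    (K : Set (Fin n → ℝ))
    (hK : K = {x | (∀ i, g i x ≤ 0) ∧ ∀ j, h j x = 0})
    (ACQ : ∀ x ∈ K, bouligandTangentCone K x = linCone g h x)
    (hrank : ∀ (α : Finset (Fin m)) (x : Fin n → ℝ) (lam : {i // i ∈ α} → ℝ),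
      (DPhi F g h α x lam).rank = n + α.card + l) :
    Set.Finite {x ∈ K | ∀ y ∈ K, 0 ≤ ∑ i, F x i * (y i - x i)} := by
  classical
  choose Pg hPg using hgpoly
  choose PF hPF using hFpoly
  set Ph : Fin l → MvPolynomial (Fin n) ℝ := fun j => affPoly (h j) with hPhdef
  have hPh : ∀ j x, h j x = eval x (Ph j) := fun j x => affPoly_eval (h j) x
  -- index type and generators of the KKT system for a given α
  let σα : Finset (Fin m) → Type := fun α => Fin n ⊕ ({i // i ∈ α} ⊕ Fin l)
  let fgen : ∀ α : Finset (Fin m), σα α → MvPolynomial (σα α) ℝ := fun α =>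
    Sum.elim
      (fun a => rename (Sum.inl : Fin n → σα α) (PF a)
        + ∑ i : {i // i ∈ α}, X (Sum.inr (Sum.inl i) : σα α)
            * rename (Sum.inl : Fin n → σα α) (pderiv a (Pg i))
        + ∑ j, X (Sum.inr (Sum.inr j) : σα α)
            * rename (Sum.inl : Fin n → σα α) (pderiv a (Ph j)))
      (Sum.elim (fun i => rename (Sum.inl : Fin n → σα α) (Pg i))
        (fun j => rename (Sum.inl : Fin n → σα α) (Ph j)))
  let Zset : ∀ α : Finset (Fin m), Set (σα α → ℝ) := fun α =>
    {z | ∀ p, eval z (fgen α p) = 0}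
  -- the Jacobian matrix of the generators equals DPhi
  have hMeq : ∀ (α : Finset (Fin m)) (z : σα α → ℝ),
      (Matrix.of fun p b => eval z (pderiv b (fgen α p)))
      = DPhi F g h α (z ∘ Sum.inl) (fun i => z (Sum.inr (Sum.inl i))) := by
    intro α z
    ext p q
    have hginl : ∀ (i : Fin m) (b : Fin n),
        eval z (pderiv (Sum.inl b : σα α) (rename Sum.inl (Pg i)))
        = grad (g i) (z ∘ Sum.inl) b := by
      intro i b
      rw [pderiv_rename Sum.inl_injective, eval_rename]
      exact (grad_eval (Pg i) (g i) (hPg i) (z ∘ Sum.inl) b).symm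
    have hhinl : ∀ (j : Fin l) (b : Fin n),
        eval z (pderiv (Sum.inl b : σα α) (rename Sum.inl (Ph j)))
        = grad (h j) (z ∘ Sum.inl) b := by
      intro j b
      rw [pderiv_rename Sum.inl_injective, eval_rename]
      exact (grad_eval (Ph j) (h j) (hPh j) (z ∘ Sum.inl) b).symm
    rcases p with a | ip
    · rcases q with b | iq
      · -- (inl a, inl b)
        show eval z (pderiv (Sum.inl b) (fgen α (Sum.inl a)))
          = jac F (z ∘ Sum.inl) a b + ∑ i : {i // i ∈ α},
            z (Sum.inr (Sum.inl i)) * hess (g i) (z ∘ Sum.inl) a b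
        simp only [fgen, Sum.elim_inl, map_add, map_sum, eval_add, eval_sum]
        rw [pderiv_rename Sum.inl_injective, eval_rename]
        have e1 : eval (z ∘ Sum.inl) (pderiv b (PF a)) = jac F (z ∘ Sum.inl) a b :=
          (jac_eval (PF a) F a (hPF a) (z ∘ Sum.inl) b).symm
        have e2 : ∀ i : {i // i ∈ α},
            eval z (pderiv (Sum.inl b : σα α)
              (X (Sum.inr (Sum.inl i)) * rename Sum.inl (pderiv a (Pg i))))
            = z (Sum.inr (Sum.inl i)) * hess (g i) (z ∘ Sum.inl) a b := by
          intro i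
          rw [pderiv_mul, pderiv_X_of_ne (by simp : (Sum.inr (Sum.inl i) : σα α) ≠ Sum.inl b),
            pderiv_rename Sum.inl_injective]
          simp only [zero_mul, zero_add, eval_mul, eval_X, eval_rename]
          rw [hess_eval (Pg i) (g i) (hPg i)]
        have e3 : ∀ j : Fin l,
            eval z (pderiv (Sum.inl b : σα α)
              (X (Sum.inr (Sum.inr j)) * rename Sum.inl (pderiv a (Ph j))))
            = 0 := by
          intro j
          rw [pderiv_mul, pderiv_X_of_ne (by simp : (Sum.inr (Sum.inr j) : σα α) ≠ Sum.inl b),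
            pderiv_rename Sum.inl_injective]
          simp only [zero_mul, zero_add, eval_mul, eval_X, eval_rename]
          rw [hPhdef, affPoly_pderiv_pderiv]
          simp
        rw [Finset.sum_congr rfl (fun i _ => e2 i), Finset.sum_congr rfl (fun j _ => e3 j)]
        rw [e1]
        simp
      · rcases iq with i' | j'
        · -- (inl a, inr inl i')
          show eval z (pderiv (Sum.inr (Sum.inl i')) (fgen α (Sum.inl a)))
            = grad (g i') (z ∘ Sum.inl) a
          simp only [fgen, Sum.elim_inl, map_add, map_sum, eval_add, eval_sum]
          rw [pderiv_rename_ne Sum.inl (by simp) (PF a)]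
          have e2 : ∀ i : {i // i ∈ α},
              eval z (pderiv (Sum.inr (Sum.inl i') : σα α)
                (X (Sum.inr (Sum.inl i)) * rename Sum.inl (pderiv a (Pg i))))
              = if i = i' then eval (z ∘ Sum.inl) (pderiv a (Pg i)) else 0 := by
            intro i
            rw [pderiv_mul, pderiv_rename_ne Sum.inl (by simp) (pderiv a (Pg i))]
            by_cases hii : i = i'
            · subst hii
              rw [pderiv_X_self]
              simp [eval_rename]
            · rw [pderiv_X_of_ne (by simp [hii])]
              simp [hii]
          have e3 : ∀ j : Fin l,
              eval z (pderiv (Sum.inr (Sum.inl i') : σα α)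
                (X (Sum.inr (Sum.inr j)) * rename Sum.inl (pderiv a (Ph j))))
              = 0 := by
            intro j
            rw [pderiv_mul, pderiv_rename_ne Sum.inl (by simp) (pderiv a (Ph j)),
              pderiv_X_of_ne (by simp)]
            simp
          rw [Finset.sum_congr rfl (fun i _ => e2 i), Finset.sum_congr rfl (fun j _ => e3 j)]
          rw [Finset.sum_ite_eq' Finset.univ i' (fun i => eval (z ∘ Sum.inl) (pderiv a (Pg i)))]
          simp [grad_eval (Pg i') (g i') (hPg i') (z ∘ Sum.inl) a]
        · -- (inl a, inr inr j')
          show eval z (pderiv (Sum.inr (Sum.inr j')) (fgen α (Sum.inl a)))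
            = grad (h j') (z ∘ Sum.inl) a
          simp only [fgen, Sum.elim_inl, map_add, map_sum, eval_add, eval_sum]
          rw [pderiv_rename_ne Sum.inl (by simp) (PF a)]
          have e2 : ∀ i : {i // i ∈ α},
              eval z (pderiv (Sum.inr (Sum.inr j') : σα α)
                (X (Sum.inr (Sum.inl i)) * rename Sum.inl (pderiv a (Pg i))))
              = 0 := by
            intro i
            rw [pderiv_mul, pderiv_rename_ne Sum.inl (by simp) (pderiv a (Pg i)),
              pderiv_X_of_ne (by simp)]
            simp
          have e3 : ∀ j : Fin l,
              eval z (pderiv (Sum.inr (Sum.inr j') : σα α)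
                (X (Sum.inr (Sum.inr j)) * rename Sum.inl (pderiv a (Ph j))))
              = if j = j' then eval (z ∘ Sum.inl) (pderiv a (Ph j)) else 0 := by
            intro j
            rw [pderiv_mul, pderiv_rename_ne Sum.inl (by simp) (pderiv a (Ph j))]
            by_cases hjj : j = j'
            · subst hjj
              rw [pderiv_X_self]
              simp [eval_rename]
            · rw [pderiv_X_of_ne (by simp [hjj])]
              simp [hjj]
          rw [Finset.sum_congr rfl (fun i _ => e2 i), Finset.sum_congr rfl (fun j _ => e3 j)]
          rw [Finset.sum_ite_eq' Finset.univ j' (fun j => eval (z ∘ Sum.inl) (pderiv a (Ph j)))]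
          simp [grad_eval (Ph j') (h j') (hPh j') (z ∘ Sum.inl) a]
    · rcases ip with i | j
      · rcases q with b | iq
        · show eval z (pderiv (Sum.inl b) (fgen α (Sum.inr (Sum.inl i))))
            = grad (g i) (z ∘ Sum.inl) b
          simp only [fgen, Sum.elim_inr, Sum.elim_inl]
          exact hginl i b
        · rcases iq with i' | j'
          · show eval z (pderiv (Sum.inr (Sum.inl i')) (fgen α (Sum.inr (Sum.inl i)))) = 0
            simp only [fgen, Sum.elim_inr, Sum.elim_inl]
            rw [pderiv_rename_ne Sum.inl (by simp) (Pg i)]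
            simp
          · show eval z (pderiv (Sum.inr (Sum.inr j')) (fgen α (Sum.inr (Sum.inl i)))) = 0
            simp only [fgen, Sum.elim_inr, Sum.elim_inl]
            rw [pderiv_rename_ne Sum.inl (by simp) (Pg i)]
            simp
      · rcases q with b | iq
        · show eval z (pderiv (Sum.inl b) (fgen α (Sum.inr (Sum.inr j))))
            = grad (h j) (z ∘ Sum.inl) b
          simp only [fgen, Sum.elim_inr]
          exact hhinl j b
        · rcases iq with i' | j'
          · show eval z (pderiv (Sum.inr (Sum.inl i')) (fgen α (Sum.inr (Sum.inr j)))) = 0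
            simp only [fgen, Sum.elim_inr]
            rw [pderiv_rename_ne Sum.inl (by simp) (Ph j)]
            simp
          · show eval z (pderiv (Sum.inr (Sum.inr j')) (fgen α (Sum.inr (Sum.inr j)))) = 0
            simp only [fgen, Sum.elim_inr]
            rw [pderiv_rename_ne Sum.inl (by simp) (Ph j)]
            simp
  -- each Zset α is finite
  have hZfin : ∀ α : Finset (Fin m), (Zset α).Finite := by
    intro α
    refine (finite_nondegenerate_zeros (fgen α)).subset ?_
    intro z hz
    refine ⟨hz, ?_⟩
    rw [hMeq α z]
    apply exists_left_inverse_of_rank_eq_card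
    rw [hrank α (z ∘ Sum.inl) (fun i => z (Sum.inr (Sum.inl i)))]
    simp [σα, Fintype.card_sum, Fintype.card_coe, add_assoc]
  -- the solution set is contained in the union of projections of the Zset α
  have hsub : {x ∈ K | ∀ y ∈ K, 0 ≤ ∑ i, F x i * (y i - x i)} ⊆
      ⋃ α : Finset (Fin m), (fun z : σα α → ℝ => z ∘ Sum.inl) '' (Zset α) := by
    rintro x ⟨hxK, hxSol⟩
    -- the variational inequality holds on the tangent cone
    have tangent_ineq : ∀ v ∈ bouligandTangentCone K x, 0 ≤ ∑ i, F x i * v i := by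
      rintro v ⟨y, t, hyK, ht, hyx, ht0, hconv⟩
      have hk : ∀ k, 0 ≤ ∑ i, F x i * ((t k)⁻¹ • (y k - x)) i := by
        intro k
        have h1 : 0 ≤ ∑ i, F x i * (y k i - x i) := hxSol (y k) (hyK k)
        have h2 : ∑ i, F x i * ((t k)⁻¹ • (y k - x)) i
            = (t k)⁻¹ * ∑ i, F x i * (y k i - x i) := by
          rw [Finset.mul_sum]
          refine Finset.sum_congr rfl fun i _ => ?_
          simp [Pi.smul_apply, Pi.sub_apply, smul_eq_mul]
          ring
        rw [h2]
        exact mul_nonneg (inv_nonneg.mpr (le_of_lt (ht k))) h1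
      have hlim : Tendsto (fun k => ∑ i, F x i * ((t k)⁻¹ • (y k - x)) i) atTop
          (nhds (∑ i, F x i * v i)) := by
        apply tendsto_finset_sum
        intro i _
        exact tendsto_const_nhds.mul (((continuous_apply i).tendsto v).comp hconv)
      exact ge_of_tendsto hlim (Filter.Eventually.of_forall hk)
    have lin_ineq : ∀ v ∈ linCone g h x, 0 ≤ ∑ i, F x i * v i := by
      intro v hv
      exact tangent_ineq v ((ACQ x hxK) ▸ hv)
    -- active index set
    set α : Finset (Fin m) := Finset.univ.filter (fun i => g i x = 0) with hα
    -- the gradient family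
    set w : ({i // i ∈ α} ⊕ Fin l) → EuclideanSpace ℝ (Fin n) :=
      Sum.elim (fun i => WithLp.toLp 2 (grad (g (↑i)) x)) (fun j => WithLp.toLp 2 (grad (h j) x)) with hw
    have hFspan : (WithLp.toLp 2 (F x) : EuclideanSpace ℝ (Fin n)) ∈ Submodule.span ℝ (Set.range w) := by
      apply mem_span_of_forall_inner
      intro v hv
      have hinner : ∀ u v : EuclideanSpace ℝ (Fin n), (inner ℝ u v : ℝ) = ∑ i, u i * v i := by
        intro u v
        rw [PiLp.inner_apply]
        simp [RCLike.inner_apply, mul_comm]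
      have hgeq : ∀ i, g i x = 0 → ∑ j, grad (g i) x j * v j = 0 := by
        intro i hgi
        have : (inner ℝ (w (Sum.inl ⟨i, by simp [hα, hgi]⟩)) v : ℝ) = 0 :=
          hv (Sum.inl ⟨i, by simp [hα, hgi]⟩)
        rw [hinner] at this
        simpa only [hw, Sum.elim_inl, WithLp.ofLp_toLp] using this
      have hheq : ∀ j', ∑ j, grad (h j') x j * v j = 0 := by
        intro j'
        have : (inner ℝ (w (Sum.inr j')) v : ℝ) = 0 := hv (Sum.inr j')
        rw [hinner] at this
        simpa only [hw, Sum.elim_inr, WithLp.ofLp_toLp] using this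
      have hvlin : (v : Fin n → ℝ) ∈ linCone g h x :=
        ⟨fun i hgi => le_of_eq (hgeq i hgi), hheq⟩
      have hvlin' : (-v : Fin n → ℝ) ∈ linCone g h x := by
        constructor
        · intro i hgi
          have hneg : ∑ j, grad (g i) x j * (-(v : Fin n → ℝ)) j = -∑ j, grad (g i) x j * v j := by
            rw [← Finset.sum_neg_distrib]
            exact Finset.sum_congr rfl fun j _ => by simp
          rw [hneg, hgeq i hgi, neg_zero]
        · intro j'
          have hneg : ∑ j, grad (h j') x j * (-(v : Fin n → ℝ)) j = -∑ j, grad (h j') x j * v j := by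
            rw [← Finset.sum_neg_distrib]
            exact Finset.sum_congr rfl fun j _ => by simp
          rw [hneg, hheq j', neg_zero]
      have hp := lin_ineq v hvlin
      have hn := lin_ineq (-v) hvlin'
      have hneg : ∑ i, F x i * (-(v : Fin n → ℝ)) i = -∑ i, F x i * v i := by
        rw [← Finset.sum_neg_distrib]
        exact Finset.sum_congr rfl fun j _ => by simp
      rw [hneg] at hn
      rw [hinner]
      simp only [WithLp.ofLp_toLp]
      linarith
    obtain ⟨c, hc⟩ := exists_coeffs_of_mem_span w _ hFspan
    -- the multipliers
    set lam : {i // i ∈ α} → ℝ := fun i => -(c (Sum.inl i)) with hlam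
    set mu : Fin l → ℝ := fun j => -(c (Sum.inr j)) with hmu
    have hstat : ∀ a : Fin n, F x a + (∑ i : {i // i ∈ α}, lam i * grad (g (↑i)) x a)
        + ∑ j, mu j * grad (h j) x a = 0 := by
      intro a
      have := congrFun (congrArg WithLp.ofLp hc) a
      have hsum : (∑ k, c k • w k) a = ∑ k, c k * w k a := by
        rw [WithLp.ofLp_sum, Finset.sum_apply]
        exact Finset.sum_congr rfl fun k _ => rfl
      rw [hsum, Fintype.sum_sum_type] at this
      simp only [hw, Sum.elim_inl, Sum.elim_inr, WithLp.ofLp_toLp] at this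
      rw [hlam, hmu]
      simp only [neg_mul]
      rw [Finset.sum_neg_distrib, Finset.sum_neg_distrib]
      linarith [this]
    -- the corresponding zero of the KKT system
    set z : σα α → ℝ := Sum.elim x (Sum.elim lam mu) with hz
    have hzinl : z ∘ Sum.inl = x := by funext a; rfl
    have hzmem : z ∈ Zset α := by
      intro p
      rcases p with a | ip
      · simp only [fgen, Sum.elim_inl, eval_add, eval_sum, eval_mul, eval_X, eval_rename, hzinl]
        have e1 : eval x (PF a) = F x a := (hPF a x).symm
        have e2 : ∀ i : {i // i ∈ α},
            z (Sum.inr (Sum.inl i)) * eval x (pderiv a (Pg i)) = lam i * grad (g (↑i)) x a := by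
          intro i
          congr 1
          exact (grad_eval (Pg i) (g i) (hPg i) x a).symm
        have e3 : ∀ j, z (Sum.inr (Sum.inr j)) * eval x (pderiv a (Ph j))
            = mu j * grad (h j) x a := by
          intro j
          congr 1
          exact (grad_eval (Ph j) (h j) (hPh j) x a).symm
        rw [Finset.sum_congr rfl (fun i _ => e2 i), Finset.sum_congr rfl (fun j _ => e3 j), e1]
        exact hstat a
      · rcases ip with i | j
        · simp only [fgen, Sum.elim_inr, Sum.elim_inl, eval_rename, hzinl]
          rw [← hPg]
          exact (Finset.mem_filter.mp i.2).2
        · simp only [fgen, Sum.elim_inr, eval_rename, hzinl]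
          rw [← hPh]
          rw [hK] at hxK
          exact hxK.2 j
    apply Set.mem_iUnion.mpr
    exact ⟨α, ⟨z, hzmem, hzinl⟩⟩
  exact (Set.Finite.subset (Set.finite_iUnion (fun α => (hZfin α).image _)) hsub)
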